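/- Let b_1,...,b_n be nonnegative real numbers, not all zero. Consider the operation: choose i ≠ j with 0 < b_i ≤ b_j and replace b_j by b_j - b_i. Then after finitely many such operations one can reach a state in which the nonzero entries are linearly independent over Q; that is, there exists a finite sequence of these operations whose result (b'_1,...,b'_n) has its nonzero entries rationally independent. -/
import Mathlib


/-- The real vector obtained from an integer vector. -/
def toReal {n : ℕ} (w : Fin n → ℤ) : Fin n → ℝ := fun j => (w j : ℝ)

/-- The cone of nonnegative real combinations of the integer vectors `w i`. -/
def realCone {n m : ℕ} (w : Fin m → Fin n → ℤ) : Set (Fin n → ℝ) :=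
  {x | ∃ c : Fin m → ℝ, (∀ i, 0 ≤ c i) ∧ x = ∑ i, c i • toReal (w i)}

/-- `w` is a `ℤ`-basis of the lattice `ℤ^n`. -/
def IsZBasis {n : ℕ} (w : Fin n → Fin n → ℤ) : Prop := IsUnit (Matrix.of w).det

/-- One step of star subdivision along the vector `v`: replace some generator `w j`
by `w i + w j` (i.e. pass to the cone of the star subdivision at `w i + w j`
omitting `w j`), where the resulting cone must contain `v`. -/
def StarStep {n : ℕ} (v : Fin n → ℝ) (w w' : Fin n → Fin n → ℤ) : Prop :=
  ∃ i j : Fin n, i ≠ j ∧ w' = Function.update w j (w i + w j) ∧ v ∈ realCone w'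

/-- The operation: subtract a smaller positive entry from a larger one. -/
def SubOp {n : ℕ} (b b' : Fin n → ℝ) : Prop :=
  ∃ i j, i ≠ j ∧ 0 < b i ∧ b i ≤ b j ∧ b' = Function.update b j (b j - b i)

section AuxStmt7

open Finset

open Classical in
/-- One subtraction move transports an integer relation. -/
private lemma stmt7_move_rel {n : ℕ} (b : Fin n → ℝ) (m : Fin n → ℤ) (s t : Fin n) (hst : s ≠ t)
    (hrel : ∑ k, (m k : ℝ) * b k = 0) :
    ∑ k, ((Function.update m s (m s + m t) k : ℤ) : ℝ) * Function.update b t (b t - b s) k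
      = 0 := by
  have key : ∀ k, ((Function.update m s (m s + m t) k : ℤ) : ℝ)
      * Function.update b t (b t - b s) k
      = (m k : ℝ) * b k + (if k = s then (m t : ℝ) * b s else 0)
        + (if k = t then -((m t : ℝ) * b s) else 0) := by
    intro k
    rcases eq_or_ne k s with rfl | hks
    · rw [Function.update_self, Function.update_of_ne hst, if_pos rfl, if_neg hst]
      push_cast; ring
    · rw [Function.update_of_ne hks, if_neg hks]
      rcases eq_or_ne k t with rfl | hkt
      · rw [Function.update_self, if_pos rfl]; ring
      · rw [Function.update_of_ne hkt, if_neg hkt]; ring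
  rw [Finset.sum_congr rfl fun k _ => key k]
  rw [Finset.sum_add_distrib, Finset.sum_add_distrib, hrel]
  simp

open Classical in
/-- A nonzero relation on nonnegative entries must have an entry of sign
opposite to `m M`. -/
private lemma stmt7_opp_exists {n : ℕ} {b : Fin n → ℝ} {m : Fin n → ℤ} {M : Fin n}
    (hb : ∀ k, 0 ≤ b k) (hrel : ∑ k, (m k : ℝ) * b k = 0)
    (hsupp : ∀ k, m k ≠ 0 → b k ≠ 0) (hM : m M ≠ 0) :
    ∃ t, m t * m M < 0 := by
  by_contra hcon
  push_neg at hcon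
  have hbM : 0 < b M := (hb M).lt_of_ne (Ne.symm (hsupp M hM))
  rcases hM.lt_or_gt with hneg | hpos
  · have hall : ∀ t, m t ≤ 0 := by
      intro t
      by_contra ht
      push_neg at ht
      nlinarith [hcon t]
    have hterm : ∀ k ∈ univ, (m k : ℝ) * b k ≤ 0 := fun k _ =>
      mul_nonpos_of_nonpos_of_nonneg (by exact_mod_cast hall k) (hb k)
    have hzero := (Finset.sum_eq_zero_iff_of_nonpos hterm).mp hrel M (mem_univ M)
    have hneg' : (m M : ℝ) * b M < 0 := mul_neg_of_neg_of_pos (by exact_mod_cast hneg) hbM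
    linarith
  · have hall : ∀ t, 0 ≤ m t := by
      intro t
      by_contra ht
      push_neg at ht
      nlinarith [hcon t]
    have hterm : ∀ k ∈ univ, 0 ≤ (m k : ℝ) * b k := fun k _ =>
      mul_nonneg (by exact_mod_cast hall k) (hb k)
    have hzero := (Finset.sum_eq_zero_iff_of_nonneg hterm).mp hrel M (mem_univ M)
    have hpos' : (0:ℝ) < (m M : ℝ) * b M := mul_pos (by exact_mod_cast hpos) hbM
    linarith

private lemma stmt7_pack_lt₁ (n A A' a' o' a o : ℕ) (h1 : A' < A) (ha' : a' ≤ n) (ho' : o' ≤ n) :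
    A' * ((n+1)*(n+1)) + a' * (n+1) + o' < A * ((n+1)*(n+1)) + a * (n+1) + o := by
  have h2 : a' * (n+1) ≤ n * (n+1) := Nat.mul_le_mul_right _ ha'
  have h3 : A' * ((n+1)*(n+1)) + (n+1)*(n+1) ≤ A * ((n+1)*(n+1)) := by
    calc A' * ((n+1)*(n+1)) + (n+1)*(n+1) = (A' + 1) * ((n+1)*(n+1)) := by ring
    _ ≤ A * ((n+1)*(n+1)) := Nat.mul_le_mul_right _ h1
  have h4 : (n+1)*(n+1) = n * (n+1) + n + 1 := by ring
  omega

private lemma stmt7_pack_lt₂ (n A a' o' a o : ℕ) (h1 : a' < a) (ho' : o' ≤ n) :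
    A * ((n+1)*(n+1)) + a' * (n+1) + o' < A * ((n+1)*(n+1)) + a * (n+1) + o := by
  have h3 : a' * (n+1) + (n+1) ≤ a * (n+1) := by
    calc a' * (n+1) + (n+1) = (a' + 1) * (n+1) := by ring
    _ ≤ a * (n+1) := Nat.mul_le_mul_right _ h1
  omega

private lemma stmt7_pack_lt₃ (n A a' o' a o : ℕ) (h1 : a' ≤ a) (ho' : o' < o) :
    A * ((n+1)*(n+1)) + a' * (n+1) + o' < A * ((n+1)*(n+1)) + a * (n+1) + o := by
  have h3 : a' * (n+1) ≤ a * (n+1) := Nat.mul_le_mul_right _ h1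
  omega

open Classical in
/-- Key descent: from any state carrying a nonzero integer relation `m`
(supported on nonzero entries) with a max-coefficient index `M`, finitely many
subtraction operations kill some nonzero entry. -/
private lemma stmt7_crux {n : ℕ} : ∀ μ : ℕ, ∀ (b : Fin n → ℝ) (m : Fin n → ℤ) (M : Fin n),
    (∀ k, 0 ≤ b k) → (∑ k, (m k : ℝ) * b k = 0) → (∀ k, m k ≠ 0 → b k ≠ 0) →
    m M ≠ 0 → (∀ k, (m k).natAbs ≤ (m M).natAbs) →
    (m M).natAbs * ((n+1) * (n+1))
      + (univ.filter fun i => (m i).natAbs = (m M).natAbs).card * (n+1)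
      + (univ.filter fun i => m i * m M < 0).card ≤ μ →
    ∃ b', Relation.ReflTransGen SubOp b b' ∧ (∀ k, 0 ≤ b' k) ∧
      (∀ k, b' k ≠ 0 → b k ≠ 0) ∧ ∃ j, b j ≠ 0 ∧ b' j = 0 := by
  intro μ
  induction μ with
  | zero =>
    intro b m M hb hrel hsupp hM hmax hμ
    have h1 : 0 < (m M).natAbs := Int.natAbs_pos.mpr hM
    have h2 : 0 < (n+1)*(n+1) := by positivity
    have h3 := Nat.mul_pos h1 h2
    have h4 : (m M).natAbs * ((n+1)*(n+1))
        ≤ (m M).natAbs * ((n+1) * (n+1))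
          + (univ.filter fun i => (m i).natAbs = (m M).natAbs).card * (n+1)
          + (univ.filter fun i => m i * m M < 0).card :=
      le_trans (Nat.le_add_right _ _) (Nat.le_add_right _ _)
    exact absurd hμ (not_le.mpr (lt_of_lt_of_le h3 h4))
  | succ μ ih =>
    intro b m M hb hrel hsupp hM hmax hμ
    obtain ⟨t0, ht0⟩ := stmt7_opp_exists hb hrel hsupp hM
    have hsigns0 : 0 < m t0 ∧ m M < 0 ∨ m t0 < 0 ∧ 0 < m M := mul_neg_iff.mp ht0
    by_cases hA : ∃ t, m t * m M < 0 ∧ b M ≤ b t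
    · -- EXIT move: subtract `b M` from `b t`, replace `m M` by `m M + m t`.
      obtain ⟨t, htop, hbt⟩ := hA
      have hsigns : 0 < m t ∧ m M < 0 ∨ m t < 0 ∧ 0 < m M := mul_neg_iff.mp htop
      have hmt : m t ≠ 0 := by rcases hsigns with ⟨h1, h2⟩ | ⟨h1, h2⟩ <;> omega
      have hMt : M ≠ t := by rintro rfl; rcases hsigns with ⟨h1, h2⟩ | ⟨h1, h2⟩ <;> omega
      have hbM : b M ≠ 0 := hsupp M hM
      have hbMpos : 0 < b M := (hb M).lt_of_ne (Ne.symm hbM)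
      set b' := Function.update b t (b t - b M) with hb'def
      set m' := Function.update m M (m M + m t) with hm'def
      have hstep : SubOp b b' := ⟨M, t, hMt, hbMpos, hbt, hb'def⟩
      have hrel' : ∑ k, (m' k : ℝ) * b' k = 0 := stmt7_move_rel b m M t hMt hrel
      have hb' : ∀ k, 0 ≤ b' k := by
        intro k
        rcases eq_or_ne k t with rfl | hk
        · rw [hb'def, Function.update_self]; linarith
        · rw [hb'def, Function.update_of_ne hk]; exact hb k
      have hbtne : b t ≠ 0 := hsupp t hmt
      have hsub : ∀ k, b' k ≠ 0 → b k ≠ 0 := by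
        intro k hk'
        rcases eq_or_ne k t with rfl | hk
        · exact hbtne
        · rw [hb'def, Function.update_of_ne hk] at hk'; exact hk'
      by_cases hdead : b' t = 0
      · exact ⟨b', Relation.ReflTransGen.single hstep, hb', hsub, t, hbtne, hdead⟩
      · have hm'M : m' M = m M + m t := by rw [hm'def, Function.update_self]
        have hm'k : ∀ k, k ≠ M → m' k = m k := fun k hk => by
          rw [hm'def, Function.update_of_ne hk]
        have hm't : m' t = m t := hm'k t (Ne.symm hMt)
        obtain ⟨M', -, hM'⟩ :=
          Finset.exists_max_image univ (fun k => (m' k).natAbs) ⟨t, mem_univ t⟩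
        have hM'max : ∀ k, (m' k).natAbs ≤ (m' M').natAbs := fun k => hM' k (mem_univ k)
        have hm'M' : m' M' ≠ 0 := by
          have h1 : 0 < (m' t).natAbs := by rw [hm't]; exact Int.natAbs_pos.mpr hmt
          exact Int.natAbs_pos.mp (lt_of_lt_of_le h1 (hM'max t))
        have hsupp' : ∀ k, m' k ≠ 0 → b' k ≠ 0 := by
          intro k hk
          rcases eq_or_ne k t with rfl | hkt
          · exact hdead
          · rw [hb'def, Function.update_of_ne hkt]
            rcases eq_or_ne k M with rfl | hkM
            · exact hbM
            · exact hsupp k (by rwa [hm'k k hkM] at hk)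
        set A := (m M).natAbs with hAdef
        have hlt : (m M + m t).natAbs < A := by
          have h5 := hmax t
          rcases hsigns with ⟨h1, h2⟩ | ⟨h1, h2⟩ <;> omega
        have hall' : ∀ k, (m' k).natAbs ≤ A := by
          intro k
          rcases eq_or_ne k M with rfl | hk
          · rw [hm'M]; exact hlt.le
          · rw [hm'k k hk]; exact hmax k
        have hA'le : (m' M').natAbs ≤ A := hall' M'
        have hach_le : (univ.filter fun i => (m' i).natAbs = (m' M').natAbs).card ≤ n := by
          calc (univ.filter fun i => (m' i).natAbs = (m' M').natAbs).card
              ≤ (univ : Finset (Fin n)).card := Finset.card_filter_le _ _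
          _ = n := by simp
        have hopp_le : (univ.filter fun i => m' i * m' M' < 0).card ≤ n := by
          calc (univ.filter fun i => m' i * m' M' < 0).card
              ≤ (univ : Finset (Fin n)).card := Finset.card_filter_le _ _
          _ = n := by simp
        have hpacked : (m' M').natAbs * ((n+1) * (n+1))
            + (univ.filter fun i => (m' i).natAbs = (m' M').natAbs).card * (n+1)
            + (univ.filter fun i => m' i * m' M' < 0).card ≤ μ := by
          rcases lt_or_eq_of_le hA'le with hlt' | heq
          · exact Nat.lt_succ_iff.mp (lt_of_lt_of_le
              (stmt7_pack_lt₁ n A (m' M').natAbs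
                ((univ.filter fun i => (m' i).natAbs = (m' M').natAbs).card)
                ((univ.filter fun i => m' i * m' M' < 0).card)
                ((univ.filter fun i => (m i).natAbs = A).card)
                ((univ.filter fun i => m i * m M < 0).card) hlt' hach_le hopp_le) hμ)
          · have hfil : (univ.filter fun i => (m' i).natAbs = A)
                = (univ.filter fun i => (m i).natAbs = A).erase M := by
              ext i
              simp only [Finset.mem_filter, Finset.mem_erase, Finset.mem_univ, true_and]
              by_cases hiM : i = M
              · rw [hiM, hm'M]
                constructor
                · intro h; omega
                · rintro ⟨h, -⟩; exact absurd rfl h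
              · rw [hm'k i hiM]
                exact ⟨fun h => ⟨hiM, h⟩, fun h => h.2⟩
            have hMmem : M ∈ univ.filter fun i => (m i).natAbs = A :=
              Finset.mem_filter.mpr ⟨mem_univ M, rfl⟩
            have hpos : 0 < (univ.filter fun i => (m i).natAbs = A).card :=
              Finset.card_pos.mpr ⟨M, hMmem⟩
            simp only [heq]
            rw [hfil, Finset.card_erase_of_mem hMmem]
            exact Nat.lt_succ_iff.mp (lt_of_lt_of_le
              (stmt7_pack_lt₂ n A ((univ.filter fun i => (m i).natAbs = A).card - 1)
                ((univ.filter fun i => m' i * m' M' < 0).card)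
                ((univ.filter fun i => (m i).natAbs = A).card)
                ((univ.filter fun i => m i * m M < 0).card)
                (Nat.sub_lt hpos one_pos) hopp_le) hμ)
        obtain ⟨b'', r'', nn'', sub'', j, hj1, hj2⟩ :=
          ih b' m' M' hb' hrel' hsupp' hm'M' hM'max hpacked
        exact ⟨b'', Relation.ReflTransGen.head hstep r'', nn'',
          fun k hk => hsub k (sub'' k hk), j, hsub j hj1, hj2⟩
    · -- LOOP move: subtract `b t0` from `b M`, replace `m t0` by `m t0 + m M`.
      push_neg at hA
      have hmt0 : m t0 ≠ 0 := by rcases hsigns0 with ⟨h1, h2⟩ | ⟨h1, h2⟩ <;> omega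
      have ht0M : t0 ≠ M := by rintro rfl; rcases hsigns0 with ⟨h1, h2⟩ | ⟨h1, h2⟩ <;> omega
      have hbt0 : b t0 ≠ 0 := hsupp t0 hmt0
      have hbt0pos : 0 < b t0 := (hb t0).lt_of_ne (Ne.symm hbt0)
      have hblt : b t0 < b M := hA t0 ht0
      have hbM : b M ≠ 0 := hsupp M hM
      set b' := Function.update b M (b M - b t0) with hb'def
      set m' := Function.update m t0 (m t0 + m M) with hm'def
      have hstep : SubOp b b' := ⟨t0, M, ht0M, hbt0pos, hblt.le, hb'def⟩
      have hrel' : ∑ k, (m' k : ℝ) * b' k = 0 := stmt7_move_rel b m t0 M ht0M hrel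
      have hb' : ∀ k, 0 ≤ b' k := by
        intro k
        rcases eq_or_ne k M with rfl | hk
        · rw [hb'def, Function.update_self]; linarith
        · rw [hb'def, Function.update_of_ne hk]; exact hb k
      have hsub : ∀ k, b' k ≠ 0 → b k ≠ 0 := by
        intro k hk'
        rcases eq_or_ne k M with rfl | hk
        · exact hbM
        · rw [hb'def, Function.update_of_ne hk] at hk'; exact hk'
      by_cases hdead : b' M = 0
      · exact ⟨b', Relation.ReflTransGen.single hstep, hb', hsub, M, hbM, hdead⟩
      · have hm'M : m' M = m M := by
          rw [hm'def, Function.update_of_ne (Ne.symm ht0M)]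
        have hm't0 : m' t0 = m t0 + m M := by rw [hm'def, Function.update_self]
        have hm'k : ∀ k, k ≠ t0 → m' k = m k := fun k hk => by
          rw [hm'def, Function.update_of_ne hk]
        have hm'Mne : m' M ≠ 0 := by rw [hm'M]; exact hM
        have hsupp' : ∀ k, m' k ≠ 0 → b' k ≠ 0 := by
          intro k hk
          rcases eq_or_ne k M with rfl | hkM
          · exact hdead
          · rw [hb'def, Function.update_of_ne hkM]
            rcases eq_or_ne k t0 with rfl | hkt
            · exact hbt0
            · exact hsupp k (by rwa [hm'k k hkt] at hk)
        set A := (m M).natAbs with hAdef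
        have hmax' : ∀ k, (m' k).natAbs ≤ (m' M).natAbs := by
          intro k
          rw [hm'M]
          by_cases hk : k = t0
          · rw [hk, hm't0]
            have h5 := hmax t0
            rcases hsigns0 with ⟨h1, h2⟩ | ⟨h1, h2⟩ <;> omega
          · rw [hm'k k hk]; exact hmax k
        have hach_sub : (univ.filter fun i => (m' i).natAbs = A)
            ⊆ (univ.filter fun i => (m i).natAbs = A) := by
          intro i hi
          simp only [Finset.mem_filter, Finset.mem_univ, true_and] at hi ⊢
          by_cases hik : i = t0
          · rw [hik, hm't0] at hi
            rw [hik]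
            have h5 := hmax t0
            rcases hsigns0 with ⟨h1, h2⟩ | ⟨h1, h2⟩ <;> omega
          · rwa [hm'k i hik] at hi
        have hoppfil : (univ.filter fun i => m' i * m' M < 0)
            = (univ.filter fun i => m i * m M < 0).erase t0 := by
          ext i
          simp only [Finset.mem_filter, Finset.mem_erase, Finset.mem_univ, true_and, hm'M]
          by_cases hik : i = t0
          · rw [hik, hm't0]
            constructor
            · intro h
              exfalso
              have hnn : 0 ≤ (m t0 + m M) * m M := by
                rcases hsigns0 with ⟨h1, h2⟩ | ⟨h1, h2⟩
                · have h3 : m t0 + m M ≤ 0 := by have := hmax t0; omega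
                  have h6 := mul_nonneg (neg_nonneg.mpr h3) (neg_nonneg.mpr h2.le)
                  rw [neg_mul_neg] at h6; exact h6
                · have h3 : 0 ≤ m t0 + m M := by have := hmax t0; omega
                  exact mul_nonneg h3 h2.le
              linarith
            · rintro ⟨h, -⟩; exact absurd rfl h
          · rw [hm'k i hik]
            exact ⟨fun h => ⟨hik, h⟩, fun h => h.2⟩
        have ht0mem : t0 ∈ univ.filter fun i => m i * m M < 0 :=
          Finset.mem_filter.mpr ⟨mem_univ t0, ht0⟩
        have hopplt : (univ.filter fun i => m' i * m' M < 0).card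
            < (univ.filter fun i => m i * m M < 0).card := by
          rw [hoppfil]
          exact Finset.card_erase_lt_of_mem ht0mem
        have hpacked : (m' M).natAbs * ((n+1) * (n+1))
            + (univ.filter fun i => (m' i).natAbs = (m' M).natAbs).card * (n+1)
            + (univ.filter fun i => m' i * m' M < 0).card ≤ μ := by
          have heqA : (m' M).natAbs = A := by rw [hm'M]
          simp only [heqA]
          exact Nat.lt_succ_iff.mp (lt_of_lt_of_le
            (stmt7_pack_lt₃ n A ((univ.filter fun i => (m' i).natAbs = A).card)
              ((univ.filter fun i => m' i * m' M < 0).card)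
              ((univ.filter fun i => (m i).natAbs = A).card)
              ((univ.filter fun i => m i * m M < 0).card)
              (Finset.card_le_card hach_sub) hopplt) hμ)
        obtain ⟨b'', r'', nn'', sub'', j, hj1, hj2⟩ :=
          ih b' m' M hb' hrel' hsupp' hm'Mne hmax' hpacked
        exact ⟨b'', Relation.ReflTransGen.head hstep r'', nn'',
          fun k hk => hsub k (sub'' k hk), j, hsub j hj1, hj2⟩

open Classical in
private lemma stmt7_outer {n : ℕ} : ∀ C : ℕ, ∀ b : Fin n → ℝ, (∀ i, 0 ≤ b i) →
    (univ.filter fun i => b i ≠ 0).card ≤ C →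
    ∃ b', Relation.ReflTransGen SubOp b b' ∧
      LinearIndependent ℚ (fun i : {i // b' i ≠ 0} => b' i.1) := by
  intro C
  induction C with
  | zero =>
    intro b hb hcard
    refine ⟨b, Relation.ReflTransGen.refl, ?_⟩
    have hempty : IsEmpty {i // b i ≠ 0} := by
      constructor
      rintro ⟨i, hi⟩
      have hmem : i ∈ univ.filter fun i => b i ≠ 0 := Finset.mem_filter.mpr ⟨mem_univ i, hi⟩
      have h0 : (univ.filter fun i => b i ≠ 0) = ∅ :=
        Finset.card_eq_zero.mp (Nat.le_zero.mp hcard)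
      rw [h0] at hmem
      exact absurd hmem (Finset.notMem_empty i)
    exact linearIndependent_empty_type
  | succ C ih =>
    intro b hb hcard
    by_cases hind : LinearIndependent ℚ (fun i : {i // b i ≠ 0} => b i.1)
    · exact ⟨b, Relation.ReflTransGen.refl, hind⟩
    · rw [← LinearIndependent.iff_fractionRing ℤ ℚ] at hind
      rw [Fintype.not_linearIndependent_iff] at hind
      obtain ⟨g, hg, i₀, hi₀⟩ := hind
      set m : Fin n → ℤ := fun k => if h : b k ≠ 0 then g ⟨k, h⟩ else 0 with hmdef
      have hmval : ∀ i : {i // b i ≠ 0}, m i.1 = g i := by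
        rintro ⟨i, hi⟩
        simp only [hmdef]
        rw [dif_pos hi]
      have hrel : ∑ k, (m k : ℝ) * b k = 0 := by
        have h1 : ∑ k, (m k : ℝ) * b k
            = ∑ k ∈ univ.filter (fun k => b k ≠ 0), (m k : ℝ) * b k := by
          refine (Finset.sum_filter_of_ne ?_).symm
          intro k _ hk hbk
          exact hk (by rw [hbk, mul_zero])
        have h2 : ∑ k ∈ univ.filter (fun k => b k ≠ 0), (m k : ℝ) * b k
            = ∑ i : {i // b i ≠ 0}, (m i.1 : ℝ) * b i.1 := by
          refine Finset.sum_subtype _ ?_ _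
          intro x; simp
        rw [h1, h2]
        have h3 : ∀ i : {i // b i ≠ 0}, (m i.1 : ℝ) * b i.1 = g i • b i.1 := by
          intro i
          rw [hmval i, zsmul_eq_mul]
        rw [Finset.sum_congr rfl fun i _ => h3 i]
        exact hg
      have hm0 : m i₀.1 ≠ 0 := by rw [hmval i₀]; exact hi₀
      obtain ⟨M, -, hM⟩ :=
        Finset.exists_max_image univ (fun k => (m k).natAbs) ⟨i₀.1, mem_univ _⟩
      have hmax : ∀ k, (m k).natAbs ≤ (m M).natAbs := fun k => hM k (mem_univ k)
      have hMne : m M ≠ 0 := by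
        have h1 : 0 < (m i₀.1).natAbs := Int.natAbs_pos.mpr hm0
        exact Int.natAbs_pos.mp (lt_of_lt_of_le h1 (hmax i₀.1))
      have hsupp : ∀ k, m k ≠ 0 → b k ≠ 0 := by
        intro k hk
        by_contra hbk
        apply hk
        simp only [hmdef]
        rw [dif_neg (not_not_intro hbk)]
      obtain ⟨b₂, hr₂, hb₂, hsub₂, j, hj1, hj2⟩ :=
        stmt7_crux _ b m M hb hrel hsupp hMne hmax le_rfl
      have hsubset : (univ.filter fun i => b₂ i ≠ 0) ⊆ (univ.filter fun i => b i ≠ 0) := by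
        intro i hi
        simp only [Finset.mem_filter, Finset.mem_univ, true_and] at hi ⊢
        exact hsub₂ i hi
      have hcardlt := Finset.card_lt_card ((Finset.ssubset_iff_of_subset hsubset).mpr
        ⟨j, Finset.mem_filter.mpr ⟨mem_univ j, hj1⟩,
          fun h => (Finset.mem_filter.mp h).2 hj2⟩)
      have hcard₂ : (univ.filter fun i => b₂ i ≠ 0).card ≤ C := by omega
      obtain ⟨b₃, hr₃, hind₃⟩ := ih b₂ hb₂ hcard₂
      exact ⟨b₃, hr₂.trans hr₃, hind₃⟩

end AuxStmt7

/-- Starting from a nonzero nonnegative vector, finitely many subtraction operations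
can reach a vector whose nonzero entries are rationally independent. -/
theorem stmt7 {n : ℕ} (b : Fin n → ℝ) (hb : ∀ i, 0 ≤ b i) (hne : b ≠ 0) :
    ∃ b', Relation.ReflTransGen SubOp b b' ∧
      LinearIndependent ℚ (fun i : {i // b' i ≠ 0} => b' i.1) := by
  classical
  obtain ⟨b', h1, h2⟩ :=
    stmt7_outer (Finset.univ.filter fun i => b i ≠ 0).card b hb le_rfl
  exact ⟨b', h1, h2⟩
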